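/- Dhar's formula: for a stationary (recurrent) sandpile measure ν_K on a finite set K ⊆ ℤ^d, the expected number of topplings at x caused by adding one grain at v and stabilizing equals G_K(v,x), the Green's function of the simple random walk killed on exiting K; i.e. ∫ N_K(v,x;η) dν_K(η) = (Δ_K^{-1})_{vx}. -/

import Mathlib

abbrev Vert (d : ℕ) := Fin d → ℤ

def SAdj {d : ℕ} (x y : Vert d) : Prop := (∑ i, |x i - y i|) = 1

instance {d : ℕ} (x y : Vert d) : Decidable (SAdj x y) := by
  unfold SAdj; infer_instance

/-- Toppling `v`: `v` loses `2d` grains, each neighbour of `v` in `K` gains one. -/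
def topple (d : ℕ) (K : Finset (Vert d)) (v : Vert d) (η : Vert d → ℕ) : Vert d → ℕ :=
  fun x => if x = v then η v - 2 * d
    else if SAdj x v ∧ x ∈ K then η x + 1 else η x

/-- Apply a sequence of topplings. -/
def applyList (d : ℕ) (K : Finset (Vert d)) : List (Vert d) → (Vert d → ℕ) → (Vert d → ℕ)
  | [], η => η
  | v :: L, η => applyList d K L (topple d K v η)

/-- A legal toppling sequence: at each step the toppled vertex lies in `K` and is
unstable (height at least `2d`) in the current configuration. -/
inductive Legal (d : ℕ) (K : Finset (Vert d)) : (Vert d → ℕ) → List (Vert d) → Prop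
  | nil (η : Vert d → ℕ) : Legal d K η []
  | cons (η : Vert d → ℕ) (v : Vert d) (L : List (Vert d)) (hv : v ∈ K)
      (h : 2 * d ≤ η v) (hL : Legal d K (topple d K v η) L) : Legal d K η (v :: L)

/-- A configuration is stable if every vertex of `K` has height less than `2d`. -/
def Stable (d : ℕ) (K : Finset (Vert d)) (η : Vert d → ℕ) : Prop := ∀ v ∈ K, η v < 2 * d

/-- Adding one grain at `v`. -/
def addGrain {d : ℕ} (v : Vert d) (η : Vert d → ℕ) : Vert d → ℕ :=
  fun x => η x + if x = v then 1 else 0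

/-- The toppling matrix `Δ_K` of `ℤ^d` restricted to `K`. -/
noncomputable def lapK (d : ℕ) (K : Finset (Vert d)) : Matrix ↥K ↥K ℝ :=
  fun x y => if (x : Vert d) = (y : Vert d) then (2 * d : ℝ)
    else if SAdj (x : Vert d) (y : Vert d) then -1 else 0

/-- The recurrent stable configurations on `K` (supported on `K`), characterized by
the burning test: every nonempty `F ⊆ K` has a vertex `v` whose height is at least
its number of neighbours in `F`. -/
def RecurrentSet (d : ℕ) (K : Finset (Vert d)) : Set (Vert d → ℕ) :=
  {η | (∀ x, x ∉ K → η x = 0) ∧ Stable d K η ∧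
    ∀ F ⊆ K, F.Nonempty → ∃ v ∈ F, (F.filter (fun x => SAdj x v)).card ≤ η v}


lemma sadj_comm {d : ℕ} {x y : Vert d} : SAdj x y ↔ SAdj y x := by
  unfold SAdj
  constructor <;> (intro h; rw [← h]; exact Finset.sum_congr rfl fun i _ => abs_sub_comm _ _)

lemma sadj_irrefl {d : ℕ} (x : Vert d) : ¬ SAdj x x := by simp [SAdj]

lemma sadj_exists {d : ℕ} {x y : Vert d} (h : SAdj x y) :
    ∃ i, (∀ j, j ≠ i → x j = y j) ∧ (x i = y i + 1 ∨ x i = y i - 1) := by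
  unfold SAdj at h
  obtain ⟨i, -, hi⟩ := Finset.exists_ne_zero_of_sum_ne_zero (by rw [h]; norm_num :
    ∑ i, |x i - y i| ≠ 0)
  have h1 : 1 ≤ |x i - y i| := by
    have := abs_nonneg (x i - y i); omega
  have hsplit : |x i - y i| + ∑ j ∈ Finset.univ.erase i, |x j - y j| = 1 := by
    rw [Finset.add_sum_erase _ (fun j => |x j - y j|) (Finset.mem_univ i)]; exact h
  have hnn : ∀ j ∈ Finset.univ.erase i, (0:ℤ) ≤ |x j - y j| := fun j _ => abs_nonneg _
  have hrest : ∑ j ∈ Finset.univ.erase i, |x j - y j| = 0 := by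
    have := Finset.sum_nonneg hnn; omega
  have hzero := (Finset.sum_eq_zero_iff_of_nonneg hnn).1 hrest
  refine ⟨i, fun j hj => ?_, ?_⟩
  · have := hzero j (Finset.mem_erase.2 ⟨hj, Finset.mem_univ j⟩)
    have := abs_eq_zero.1 this; omega
  · have : |x i - y i| = 1 := by omega
    rcases abs_eq (by norm_num : (0:ℤ) ≤ 1) |>.1 this with h' | h' <;> omega

/-- Label of a neighbour: coordinate direction and sign. -/
noncomputable def nb {d : ℕ} (hd : 0 < d) (v z : Vert d) : Fin d × Bool :=
  if h : SAdj z v then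
    ⟨(sadj_exists h).choose,
      decide (z ((sadj_exists h).choose) = v ((sadj_exists h).choose) + 1)⟩
  else ⟨⟨0, hd⟩, true⟩

lemma nb_spec {d : ℕ} (hd : 0 < d) {v z : Vert d} (h : SAdj z v) :
    (∀ j, j ≠ (nb hd v z).1 → z j = v j) ∧
    (z ((nb hd v z).1) = v ((nb hd v z).1) + 1 ∨
      z ((nb hd v z).1) = v ((nb hd v z).1) - 1) ∧
    ((nb hd v z).2 = true ↔ z ((nb hd v z).1) = v ((nb hd v z).1) + 1) := by
  unfold nb
  rw [dif_pos h]
  refine ⟨(sadj_exists h).choose_spec.1, (sadj_exists h).choose_spec.2, ?_⟩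
  simp

lemma nb_injOn {d : ℕ} (hd : 0 < d) {v z z' : Vert d} (h : SAdj z v) (h' : SAdj z' v)
    (he : nb hd v z = nb hd v z') : z = z' := by
  obtain ⟨hoff, hor, hb⟩ := nb_spec hd h
  obtain ⟨hoff', hor', hb'⟩ := nb_spec hd h'
  funext j
  by_cases hj : j = (nb hd v z).1
  · subst hj
    have h1 : (nb hd v z').1 = (nb hd v z).1 := by rw [he]
    rw [h1] at hoff' hor' hb'
    by_cases hbt : (nb hd v z).2 = true
    · have := hb.1 hbt
      have hbt' : (nb hd v z').2 = true := by rw [← he]; exact hbt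
      have := hb'.1 hbt'
      omega
    · have h2 : ¬ z ((nb hd v z).1) = v ((nb hd v z).1) + 1 := fun hc => hbt (hb.2 hc)
      have hbt' : ¬ (nb hd v z').2 = true := by rw [← he]; exact hbt
      have h2' : ¬ z' ((nb hd v z).1) = v ((nb hd v z).1) + 1 := fun hc => hbt' (hb'.2 hc)
      omega
  · rw [hoff j hj, hoff' j (by rw [← he]; exact hj)]

lemma card_sadj_le {d : ℕ} (hd : 0 < d) (F : Finset (Vert d)) (v : Vert d) :
    (F.filter fun z => SAdj z v).card ≤ 2 * d := by
  have := Finset.card_le_card_of_injOn (nb hd v)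
    (fun z _ => Finset.mem_univ (nb hd v z) : ∀ z ∈ F.filter fun z => SAdj z v,
      nb hd v z ∈ (Finset.univ : Finset (Fin d × Bool)))
    (fun z hz z' hz' he => nb_injOn hd (Finset.mem_filter.1 hz).2 (Finset.mem_filter.1 hz').2 he)
  simpa [Finset.card_univ, mul_comm] using this

lemma card_sadj_le_pred {d : ℕ} (hd : 0 < d) (F : Finset (Vert d)) (v : Vert d)
    (hmax : ∀ z ∈ F, z ⟨0, hd⟩ ≤ v ⟨0, hd⟩) :
    (F.filter fun z => SAdj z v).card ≤ 2 * d - 1 := by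
  have hmem : ∀ z ∈ F.filter fun z => SAdj z v,
      nb hd v z ∈ (Finset.univ : Finset (Fin d × Bool)).erase (⟨⟨0, hd⟩, true⟩) := by
    intro z hz
    obtain ⟨hzF, hzadj⟩ := Finset.mem_filter.1 hz
    refine Finset.mem_erase.2 ⟨?_, Finset.mem_univ _⟩
    intro hc
    obtain ⟨hoff, hor, hb⟩ := nb_spec hd hzadj
    have h1 : (nb hd v z).1 = ⟨0, hd⟩ := by rw [hc]
    have h2 : (nb hd v z).2 = true := by rw [hc]
    have := hb.1 h2
    rw [h1] at this
    have := hmax z hzF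
    omega
  have := Finset.card_le_card_of_injOn (nb hd v) hmem
    (fun z hz z' hz' he => nb_injOn hd (Finset.mem_filter.1 hz).2 (Finset.mem_filter.1 hz').2 he)
  have hcard : ((Finset.univ : Finset (Fin d × Bool)).erase (⟨⟨0, hd⟩, true⟩)).card
      = 2 * d - 1 := by
    rw [Finset.card_erase_of_mem (Finset.mem_univ _)]
    simp [Finset.card_univ, mul_comm]
  omega

/-- Burning-test predicate for arbitrary (not necessarily stable) configurations. -/
def Burn (d : ℕ) (K : Finset (Vert d)) (η : Vert d → ℕ) : Prop :=
  ∀ F ⊆ K, F.Nonempty → ∃ u ∈ F, (F.filter (fun z => SAdj z u)).card ≤ η u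

lemma burn_mono {d : ℕ} {K : Finset (Vert d)} {η η' : Vert d → ℕ}
    (h : ∀ z, η z ≤ η' z) (hb : Burn d K η) : Burn d K η' := by
  intro F hF hne
  obtain ⟨u, hu, hc⟩ := hb F hF hne
  exact ⟨u, hu, le_trans hc (h u)⟩

lemma burn_topple {d : ℕ} {K : Finset (Vert d)} {η : Vert d → ℕ} (w : Vert d)
    (hb : Burn d K η) : Burn d K (topple d K w η) := by
  intro F hF hne
  by_cases hwF : w ∈ F
  · rcases Finset.eq_singleton_or_nontrivial hwF with hsing | hnt
    · refine ⟨w, hwF, ?_⟩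
      have : F.filter (fun z => SAdj z w) = ∅ := by
        rw [hsing]
        simp [Finset.filter_singleton, sadj_irrefl]
      rw [hsing] at this ⊢
      simp [this]
    · have hne' : (F.erase w).Nonempty := by
        obtain ⟨a, ha, b, hb', hab⟩ := hnt
        rcases eq_or_ne a w with rfl | haw
        · exact ⟨b, Finset.mem_erase.2 ⟨fun hc => hab hc.symm, hb'⟩⟩
        · exact ⟨a, Finset.mem_erase.2 ⟨haw, ha⟩⟩
      obtain ⟨u, hu, hc⟩ := hb (F.erase w) (le_trans (Finset.erase_subset _ _) hF) hne'
      obtain ⟨huw, huF⟩ := Finset.mem_erase.1 hu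
      refine ⟨u, huF, ?_⟩
      by_cases hadj : SAdj u w
      · have hval : topple d K w η u = η u + 1 := by
          unfold topple
          rw [if_neg huw, if_pos ⟨hadj, hF huF⟩]
        have hsub : F.filter (fun z => SAdj z u) ⊆
            insert w ((F.erase w).filter (fun z => SAdj z u)) := by
          intro z hz
          obtain ⟨hzF, hzu⟩ := Finset.mem_filter.1 hz
          rcases eq_or_ne z w with rfl | hzw
          · exact Finset.mem_insert_self _ _
          · exact Finset.mem_insert_of_mem
              (Finset.mem_filter.2 ⟨Finset.mem_erase.2 ⟨hzw, hzF⟩, hzu⟩)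
        calc (F.filter (fun z => SAdj z u)).card
            ≤ (insert w ((F.erase w).filter (fun z => SAdj z u))).card :=
              Finset.card_le_card hsub
          _ ≤ ((F.erase w).filter (fun z => SAdj z u)).card + 1 :=
              Finset.card_insert_le _ _
          _ ≤ η u + 1 := by omega
          _ = topple d K w η u := hval.symm
      · have hval : topple d K w η u = η u := by
          unfold topple
          rw [if_neg huw, if_neg (fun hc => hadj hc.1)]
        have hsub : F.filter (fun z => SAdj z u) ⊆
            (F.erase w).filter (fun z => SAdj z u) := by
          intro z hz
          obtain ⟨hzF, hzu⟩ := Finset.mem_filter.1 hz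
          refine Finset.mem_filter.2 ⟨Finset.mem_erase.2 ⟨?_, hzF⟩, hzu⟩
          rintro rfl
          exact hadj (sadj_comm.1 hzu)
        rw [hval]
        exact le_trans (Finset.card_le_card hsub) hc
  · obtain ⟨u, hu, hc⟩ := hb F hF hne
    refine ⟨u, hu, le_trans hc ?_⟩
    unfold topple
    rw [if_neg (fun hc' : u = w => hwF (hc' ▸ hu))]
    split <;> omega


lemma topple_cast {d : ℕ} {K : Finset (Vert d)} {η : Vert d → ℕ} (w y : Vert d)
    (hw : 2 * d ≤ η w) :
    (topple d K w η y : ℤ) = (η y : ℤ) + (if SAdj y w ∧ y ∈ K then 1 else 0)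
      - (if y = w then (2 * d : ℤ) else 0) := by
  unfold topple
  rcases eq_or_ne y w with rfl | hne
  · rw [if_pos rfl, if_pos rfl, if_neg (fun hc => sadj_irrefl y hc.1)]
    push_cast [hw]
    ring
  · rw [if_neg hne, if_neg hne]
    split <;> push_cast <;> ring

lemma conserve {d : ℕ} {K : Finset (Vert d)} (L : List (Vert d)) :
    ∀ η : Vert d → ℕ, Legal d K η L → ∀ y ∈ K,
    (applyList d K L η y : ℤ) = (η y : ℤ)
      + (∑ z ∈ K.filter (fun z => SAdj z y), (L.count z : ℤ))
      - 2 * d * (L.count y : ℤ) := by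
  induction L with
  | nil => intro η _ y hy; simp [applyList]
  | cons w L IH =>
    intro η hleg y hy
    cases hleg with
    | cons _ _ _ hw hge htail =>
      have IH' := IH (topple d K w η) htail y hy
      show (applyList d K L (topple d K w η) y : ℤ) = _
      rw [IH', topple_cast w y hge]
      have hcnt : ∀ z : Vert d, ((w :: L).count z : ℤ)
          = (L.count z : ℤ) + (if z = w then 1 else 0) := by
        intro z
        rcases eq_or_ne z w with rfl | hne
        · simp [List.count_cons]
        · simp [List.count_cons, hne, Ne.symm hne]
      simp only [hcnt]
      rw [Finset.sum_add_distrib, Finset.sum_ite_eq' (K.filter (fun z => SAdj z y)) w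
        (fun _ => (1 : ℤ))]
      have hmem : w ∈ K.filter (fun z => SAdj z y) ↔ SAdj w y := by
        simp [Finset.mem_filter, hw]
      rcases eq_or_ne y w with rfl | hyw
      · rw [if_neg (fun hc => sadj_irrefl y hc.1), if_pos rfl, if_pos rfl,
          if_neg (by rw [hmem]; exact sadj_irrefl y)]
        ring
      · rw [if_neg hyw, if_neg hyw]
        by_cases hadj : SAdj w y
        · rw [if_pos ⟨sadj_comm.2 hadj, hy⟩, if_pos (hmem.2 hadj)]
          ring
        · rw [if_neg (fun hc => hadj (sadj_comm.1 hc.1)), if_neg (fun hc => hadj (hmem.1 hc))]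
          ring

lemma applyList_pre {d : ℕ} {K : Finset (Vert d)} (L : List (Vert d)) :
    ∀ η : Vert d → ℕ, Legal d K η L → (∀ x ∉ K, η x = 0) → Burn d K η →
    (∀ x ∉ K, applyList d K L η x = 0) ∧ Burn d K (applyList d K L η) := by
  induction L with
  | nil => intro η _ h1 h2; exact ⟨h1, h2⟩
  | cons w L IH =>
    intro η hleg h1 h2
    cases hleg with
    | cons _ _ _ hw hge htail =>
      refine IH (topple d K w η) htail ?_ (burn_topple w h2)
      intro z hz
      unfold topple
      rw [if_neg (fun hc : z = w => hz (hc ▸ hw)), if_neg (fun hc => hz hc.2)]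
      exact h1 z hz

lemma addGrain_pre {d : ℕ} {K : Finset (Vert d)} {η : Vert d → ℕ} {v : Vert d} (hv : v ∈ K)
    (h1 : ∀ x ∉ K, η x = 0) (h2 : Burn d K η) :
    (∀ x ∉ K, addGrain v η x = 0) ∧ Burn d K (addGrain v η) := by
  constructor
  · intro z hz
    unfold addGrain
    rw [if_neg (fun hc : z = v => hz (hc ▸ hv))]
    simpa using h1 z hz
  · exact burn_mono (fun z => by unfold addGrain; omega) h2

lemma rec_burn {d : ℕ} {K : Finset (Vert d)} {η : Vert d → ℕ}
    (h : η ∈ RecurrentSet d K) : Burn d K η := h.2.2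

lemma rec_nonempty {d : ℕ} (hd : 0 < d) (K : Finset (Vert d)) :
    (fun z => if z ∈ K then 2 * d - 1 else 0) ∈ RecurrentSet d K := by
  refine ⟨fun z hz => if_neg hz, fun z hz => by simp only []; rw [if_pos hz]; omega, ?_⟩
  intro F hF hne
  obtain ⟨u, hu, hmax⟩ := Finset.exists_max_image F (fun z => z ⟨0, hd⟩) hne
  refine ⟨u, hu, ?_⟩
  simp only []
  rw [if_pos (hF hu)]
  exact card_sadj_le_pred hd F u hmax


lemma diff_nonpos {d : ℕ} {K : Finset (Vert d)} (hd : 0 < d) {η₁ η₂ : Vert d → ℕ}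
    (h₁ : η₁ ∈ RecurrentSet d K) (h₂ : η₂ ∈ RecurrentSet d K) (m : Vert d → ℤ)
    (h : ∀ y ∈ K, (η₂ y : ℤ) = (η₁ y : ℤ)
      - (2 * d * m y - ∑ z ∈ K.filter (fun z => SAdj z y), m z)) :
    ∀ y ∈ K, m y ≤ 0 := by
  by_contra hc
  push_neg at hc
  obtain ⟨y₀, hy₀, hy₀pos⟩ := hc
  have hne : (K.image m).Nonempty := ⟨m y₀, Finset.mem_image_of_mem m hy₀⟩
  set M := (K.image m).max' hne with hM
  have hMy : ∀ z ∈ K, m z ≤ M := fun z hz => Finset.le_max' _ _ (Finset.mem_image_of_mem m hz)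
  have hMpos : 0 < M := lt_of_lt_of_le hy₀pos (hMy y₀ hy₀)
  obtain ⟨u₀, hu₀K, hu₀M⟩ := Finset.mem_image.1 ((K.image m).max'_mem hne)
  set F := K.filter (fun z => m z = M) with hF
  have hFne : F.Nonempty := ⟨u₀, Finset.mem_filter.2 ⟨hu₀K, hu₀M⟩⟩
  obtain ⟨u, huF, hcard⟩ := h₂.2.2 F (Finset.filter_subset _ _) hFne
  obtain ⟨huK, huM⟩ := Finset.mem_filter.1 huF
  set A := K.filter (fun z => SAdj z u) with hA
  have hAcard : A.card ≤ 2 * d := card_sadj_le hd K u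
  set c1 := (A.filter (fun z => m z = M)).card with hc1
  set c2 := (A.filter (fun z => ¬ m z = M)).card with hc2
  have hcards : c1 + c2 = A.card := Finset.card_filter_add_card_filter_not _
  have hb1 : ∑ z ∈ A.filter (fun z => m z = M), m z = M * c1 := by
    rw [Finset.sum_congr rfl (fun z hz => (Finset.mem_filter.1 hz).2), Finset.sum_const,
      nsmul_eq_mul, mul_comm]
  have hb2 : ∑ z ∈ A.filter (fun z => ¬ m z = M), m z ≤ (M - 1) * c2 := by
    rw [mul_comm]
    have := Finset.sum_le_card_nsmul (A.filter (fun z => ¬ m z = M)) m (M - 1) ?_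
    · simpa using this
    · intro z hz
      obtain ⟨hzA, hzM⟩ := Finset.mem_filter.1 hz
      have := hMy z (Finset.mem_filter.1 hzA).1
      omega
  have hsplit : ∑ z ∈ A, m z = ∑ z ∈ A.filter (fun z => m z = M), m z
      + ∑ z ∈ A.filter (fun z => ¬ m z = M), m z :=
    (Finset.sum_filter_add_sum_filter_not A _ m).symm
  have hle : (c1 : ℤ) + (c2 : ℤ) ≤ 2 * d := by exact_mod_cast hcards ▸ (by exact_mod_cast hAcard : ((A.card : ℤ) ≤ 2 * d))
  have hprod : (M - 1) * ((c1 : ℤ) + (c2 : ℤ)) ≤ (M - 1) * (2 * d) :=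
    mul_le_mul_of_nonneg_left hle (by omega)
  have hS : ∑ z ∈ A, m z ≤ (M - 1) * (2 * d) + c1 := by
    rw [hsplit, hb1]
    nlinarith [hb2, hprod]
  have hkey := h u huK
  have hstab : (η₁ u : ℤ) < 2 * d := by exact_mod_cast h₁.2.1 u huK
  have hFfil : (F.filter (fun z => SAdj z u)).card = c1 := by
    rw [hF, Finset.filter_comm, ← hA]
  have hcardZ : (c1 : ℤ) ≤ (η₂ u : ℤ) := by
    rw [← hFfil]; exact_mod_cast hcard
  have hAsum : ∑ z ∈ K.filter (fun z => SAdj z u), m z = ∑ z ∈ A, m z := by rw [hA]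
  rw [hAsum] at hkey
  rw [← hM] at hu₀M
  have huM' : m u = M := huM
  rw [huM'] at hkey
  linarith

lemma rec_finite (d : ℕ) (K : Finset (Vert d)) : (RecurrentSet d K).Finite := by
  classical
  have himg : (fun η : Vert d → ℕ => (fun k : ↥K => η ↑k)) '' RecurrentSet d K ⊆
      Set.pi Set.univ (fun _ : ↥K => Set.Iio (2 * d)) := by
    rintro g ⟨η, hη, rfl⟩ k _
    exact hη.2.1 ↑k k.2
  have hfin : (Set.pi Set.univ (fun _ : ↥K => Set.Iio (2 * d))).Finite :=
    Set.Finite.pi (fun _ => Set.finite_Iio _)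
  apply Set.Finite.of_finite_image (hfin.subset himg)
  intro a ha b hb hab
  funext z
  by_cases hz : z ∈ K
  · exact congrFun hab ⟨z, hz⟩
  · rw [ha.1 z hz, hb.1 z hz]

/-- Dhar's formula: under the uniform measure `ν_K` on recurrent configurations on a
finite `K ⊆ ℤ^d`, the expected number of topplings at `x` caused by adding one grain
at `v` and stabilizing equals `G_K(v,x) = (Δ_K⁻¹)_{vx}`. Here `N η x` is the number
of topplings at `x` in (any) legal stabilization of `η + δ_v`. -/
theorem dhar_formula (d : ℕ) (K : Finset (Vert d)) (v x : Vert d)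
    (hv : v ∈ K) (hx : x ∈ K) (hdet : IsUnit (lapK d K).det)
    (N : (Vert d → ℕ) → Vert d → ℕ)
    (hN : ∀ η ∈ RecurrentSet d K, ∃ L : List (Vert d),
      Legal d K (addGrain v η) L ∧
      Stable d K (applyList d K L (addGrain v η)) ∧
      ∀ y, L.count y = N η y) :
    (∑' η : (RecurrentSet d K), (N (η : Vert d → ℕ) x : ℝ))
        / ((RecurrentSet d K).ncard : ℝ)
      = (lapK d K)⁻¹ ⟨v, hv⟩ ⟨x, hx⟩ := by
  classical
  rcases Nat.eq_zero_or_pos d with rfl | hd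
  · exfalso
    have hzero : lapK 0 K = 0 := by
      ext y z
      unfold lapK
      have hns : ¬ SAdj (y : Vert 0) (z : Vert 0) := by simp [SAdj]
      split
      · norm_num
      · simp [hns]
    rw [hzero] at hdet
    have hne : Nonempty ↥K := ⟨⟨v, hv⟩⟩
    rw [Matrix.det_zero] at hdet
    simpa using hdet
  have hfin := rec_finite d K
  obtain ⟨t, hts⟩ := hfin.exists_finset_coe
  have hmem_t : ∀ η, η ∈ t ↔ η ∈ RecurrentSet d K := by
    intro η
    rw [← hts]
    exact Iff.rfl
  have htne : t.Nonempty := ⟨_, (hmem_t _).2 (rec_nonempty hd K)⟩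
  have hcard0 : (0 : ℝ) < (t.card : ℝ) := by
    exact_mod_cast Finset.card_pos.2 htne
  choose L hleg hstab' hcnt using hN
  set σ : (Vert d → ℕ) → (Vert d → ℕ) := fun η =>
    if h : η ∈ RecurrentSet d K then applyList d K (L η h) (addGrain v η) else η with hσ
  have hσval : ∀ η (h : η ∈ RecurrentSet d K),
      σ η = applyList d K (L η h) (addGrain v η) := fun η h => dif_pos h
  have hσrec : ∀ η, ∀ h : η ∈ RecurrentSet d K, σ η ∈ RecurrentSet d K := by
    intro η h
    rw [hσval η h]
    obtain ⟨hsup, hburn⟩ := addGrain_pre hv h.1 (rec_burn h)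
    obtain ⟨hsup', hburn'⟩ := applyList_pre _ _ (hleg η h) hsup hburn
    exact ⟨hsup', hstab' η h, hburn'⟩
  have hcons : ∀ η, ∀ h : η ∈ RecurrentSet d K, ∀ y ∈ K,
      (σ η y : ℤ) = (η y : ℤ) + (if y = v then 1 else 0)
        + (∑ z ∈ K.filter (fun z => SAdj z y), (N η z : ℤ))
        - 2 * d * (N η y : ℤ) := by
    intro η h y hy
    rw [hσval η h, conserve (L η h) (addGrain v η) (hleg η h) y hy]
    have hag : (addGrain v η y : ℤ) = (η y : ℤ) + (if y = v then 1 else 0) := by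
      unfold addGrain
      split <;> push_cast <;> ring
    rw [hag]
    simp only [hcnt η h]
  have hinj : ∀ η₁, η₁ ∈ RecurrentSet d K → ∀ η₂, η₂ ∈ RecurrentSet d K →
      σ η₁ = σ η₂ → η₁ = η₂ := by
    intro η₁ h₁ η₂ h₂ he
    set m : Vert d → ℤ := fun z => (N η₁ z : ℤ) - (N η₂ z : ℤ) with hm
    have hrel : ∀ y ∈ K, (η₂ y : ℤ) = (η₁ y : ℤ)
        - (2 * d * m y - ∑ z ∈ K.filter (fun z => SAdj z y), m z) := by
      intro y hy
      have e₁ := hcons η₁ h₁ y hy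
      have e₂ := hcons η₂ h₂ y hy
      rw [he] at e₁
      have hsum : ∑ z ∈ K.filter (fun z => SAdj z y), m z
          = (∑ z ∈ K.filter (fun z => SAdj z y), (N η₁ z : ℤ))
            - ∑ z ∈ K.filter (fun z => SAdj z y), (N η₂ z : ℤ) := by
        rw [← Finset.sum_sub_distrib]
      rw [hsum]
      have hmy : m y = (N η₁ y : ℤ) - (N η₂ y : ℤ) := rfl
      rw [hmy]
      linarith
    have hn1 := diff_nonpos hd h₁ h₂ m hrel
    have hrel' : ∀ y ∈ K, (η₁ y : ℤ) = (η₂ y : ℤ)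
        - (2 * d * (-m) y - ∑ z ∈ K.filter (fun z => SAdj z y), (-m) z) := by
      intro y hy
      have := hrel y hy
      have hsum : ∑ z ∈ K.filter (fun z => SAdj z y), (-m) z
          = - ∑ z ∈ K.filter (fun z => SAdj z y), m z := by
        simp
      rw [hsum]
      simp only [Pi.neg_apply]
      linarith
    have hn2 := diff_nonpos hd h₂ h₁ (-m) hrel'
    have hm0 : ∀ y ∈ K, m y = 0 := by
      intro y hy
      have := hn1 y hy
      have h2' := hn2 y hy
      simp only [Pi.neg_apply] at h2'
      omega
    funext z
    by_cases hz : z ∈ K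
    · have hr := hrel z hz
      have hsum0 : ∑ z' ∈ K.filter (fun z' => SAdj z' z), m z' = 0 :=
        Finset.sum_eq_zero (fun z' hz' => hm0 z' (Finset.mem_filter.1 hz').1)
      rw [hsum0, hm0 z hz] at hr
      have : (η₂ z : ℤ) = (η₁ z : ℤ) := by linarith
      exact_mod_cast this.symm
    · rw [h₁.1 z hz, h₂.1 z hz]
  have hmaps : ∀ η ∈ t, σ η ∈ t := fun η h => (hmem_t _).2 (hσrec η ((hmem_t η).1 h))
  have hinj_t : ∀ a ∈ t, ∀ b ∈ t, σ a = σ b → a = b :=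
    fun a ha b hb hab => hinj a ((hmem_t a).1 ha) b ((hmem_t b).1 hb) hab
  have himg : t.image σ = t := by
    apply Finset.eq_of_subset_of_card_le
    · intro ξ hξ
      obtain ⟨η, hη, rfl⟩ := Finset.mem_image.1 hξ
      exact hmaps η hη
    · rw [Finset.card_image_of_injOn (fun a ha b hb hab =>
        hinj_t a (Finset.mem_coe.1 ha) b (Finset.mem_coe.1 hb) hab)]
  have hsum_eq : ∀ f : (Vert d → ℕ) → ℤ, ∑ η ∈ t, f (σ η) = ∑ η ∈ t, f η := by
    intro f
    conv_rhs => rw [← himg]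
    rw [Finset.sum_image hinj_t]
  have hkey : ∀ y ∈ K,
      2 * d * (∑ η ∈ t, (N η y : ℤ))
        - ∑ z ∈ K.filter (fun z => SAdj z y), (∑ η ∈ t, (N η z : ℤ))
      = (if y = v then (t.card : ℤ) else 0) := by
    intro y hy
    have hsums : ∑ η ∈ t, (σ η y : ℤ) = ∑ η ∈ t, (η y : ℤ) := hsum_eq (fun η => (η y : ℤ))
    have hexp : ∑ η ∈ t, (σ η y : ℤ)
        = ∑ η ∈ t, ((η y : ℤ) + (if y = v then 1 else 0)
          + (∑ z ∈ K.filter (fun z => SAdj z y), (N η z : ℤ)) - 2 * d * (N η y : ℤ)) :=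
      Finset.sum_congr rfl (fun η hη => hcons η ((hmem_t η).1 hη) y hy)
    rw [hexp] at hsums
    rw [Finset.sum_sub_distrib, Finset.sum_add_distrib, Finset.sum_add_distrib,
      Finset.sum_const, Finset.sum_comm, ← Finset.mul_sum] at hsums
    have hite : t.card • (if y = v then (1:ℤ) else 0) = (if y = v then (t.card : ℤ) else 0) := by
      split <;> simp
    rw [hite] at hsums
    linarith
  -- pass to real numbers
  set Sf : Vert d → ℝ := fun z => ∑ η ∈ t, (N η z : ℝ) with hSf
  set sf : Vert d → ℝ := fun z => Sf z / (t.card : ℝ) with hsf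
  have hkeyR : ∀ y ∈ K, 2 * d * sf y - ∑ z ∈ K.filter (fun z => SAdj z y), sf z
      = (if y = v then (1 : ℝ) else 0) := by
    intro y hy
    have h0 := hkey y hy
    have h1 : 2 * d * Sf y - ∑ z ∈ K.filter (fun z => SAdj z y), Sf z
        = (if y = v then (t.card : ℝ) else 0) := by
      have h0' := congrArg (fun r : ℤ => (r : ℝ)) h0
      push_cast at h0'
      rcases eq_or_ne y v with rfl | hyv
      · rw [if_pos rfl] at h0' ⊢
        simpa [hSf] using h0'
      · rw [if_neg hyv] at h0' ⊢
        simpa [hSf] using h0'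
    have hc := hcard0.ne'
    rw [hsf]
    simp only []
    rw [← Finset.sum_div, ← mul_div_assoc, ← sub_div, h1]
    rcases eq_or_ne y v with rfl | hyv
    · rw [if_pos rfl, if_pos rfl, div_self hc]
    · rw [if_neg hyv, if_neg hyv, zero_div]
  -- the matrix equation
  have hmul : Matrix.mulVec (lapK d K) (fun z : ↥K => sf ↑z) = Pi.single ⟨v, hv⟩ 1 := by
    funext y
    have hterm : ∀ z : ↥K, lapK d K y z * sf ↑z
        = (if y = z then 2 * d * sf ↑z else 0)
          + (if SAdj (z : Vert d) (y : Vert d) then -(sf ↑z) else 0) := by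
      intro z
      unfold lapK
      rcases eq_or_ne y z with rfl | hyz
      · rw [if_pos rfl, if_pos rfl, if_neg (sadj_irrefl (↑y : Vert d))]
        ring
      · have hco : ¬ ((y : Vert d) = (z : Vert d)) := fun hc => hyz (Subtype.ext hc)
        rw [if_neg hco, if_neg hyz]
        by_cases hadj : SAdj (y : Vert d) (z : Vert d)
        · rw [if_pos hadj, if_pos (sadj_comm.1 hadj)]
          ring
        · rw [if_neg hadj, if_neg (fun hc => hadj (sadj_comm.1 hc))]
          ring
    have : (Matrix.mulVec (lapK d K) (fun z : ↥K => sf ↑z)) y = ∑ z : ↥K, lapK d K y z * sf ↑z := rfl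
    rw [this, Finset.sum_congr rfl (fun z _ => hterm z), Finset.sum_add_distrib,
      Finset.sum_ite_eq Finset.univ y (fun z : ↥K => 2 * d * sf ↑z), if_pos (Finset.mem_univ y)]
    have h2 : ∑ z : ↥K, (if SAdj (z : Vert d) (y : Vert d) then -(sf ↑z) else 0)
        = - ∑ z ∈ K.filter (fun z => SAdj z ↑y), sf z := by
      rw [Finset.sum_filter]
      rw [← Finset.sum_coe_sort K (fun z => if SAdj z (↑y : Vert d) then sf z else 0)]
      rw [← Finset.sum_neg_distrib]
      exact Finset.sum_congr rfl (fun z _ => by split <;> simp)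
    rw [h2]
    have h3 := hkeyR ↑y y.2
    have h4 : (Pi.single (⟨v, hv⟩ : ↥K) (1 : ℝ) : ↥K → ℝ) y = (if (y : Vert d) = v then (1 : ℝ) else 0) := by
      rw [Pi.single_apply]
      congr 1
      simp [Subtype.ext_iff]
    rw [h4, ← h3]
    ring
  have hsolve : (fun z : ↥K => sf ↑z) = Matrix.mulVec (lapK d K)⁻¹ (Pi.single ⟨v, hv⟩ 1) := by
    rw [← hmul, Matrix.mulVec_mulVec, Matrix.nonsing_inv_mul _ hdet, Matrix.one_mulVec]
  have hxval : sf x = (lapK d K)⁻¹ ⟨x, hx⟩ ⟨v, hv⟩ := by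
    have h5 := congrFun hsolve ⟨x, hx⟩
    rw [Matrix.mulVec_single] at h5
    simpa using h5
  have hsymm : (lapK d K)⁻¹ ⟨v, hv⟩ ⟨x, hx⟩ = (lapK d K)⁻¹ ⟨x, hx⟩ ⟨v, hv⟩ := by
    have hs : (lapK d K).transpose = lapK d K := by
      ext a b
      rw [Matrix.transpose_apply]
      unfold lapK
      rcases eq_or_ne (a : Vert d) (b : Vert d) with hab | hab
      · rw [if_pos hab, if_pos hab.symm]
      · rw [if_neg (fun hc => hab hc.symm), if_neg hab]
        by_cases hadj : SAdj (a : Vert d) (b : Vert d)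
        · rw [if_pos hadj, if_pos (sadj_comm.1 hadj)]
        · rw [if_neg hadj, if_neg (fun hc => hadj (sadj_comm.1 hc))]
    have h6 : ((lapK d K)⁻¹).transpose = (lapK d K)⁻¹ := by
      rw [Matrix.transpose_nonsing_inv, hs]
    calc (lapK d K)⁻¹ ⟨v, hv⟩ ⟨x, hx⟩ = ((lapK d K)⁻¹).transpose ⟨x, hx⟩ ⟨v, hv⟩ := rfl
      _ = (lapK d K)⁻¹ ⟨x, hx⟩ ⟨v, hv⟩ := by rw [h6]
  rw [hsymm, ← hxval]
  rw [← hts, Finset.tsum_subtype' t (fun η => (N η x : ℝ)), Set.ncard_coe_finset]
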